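/- Let F_m be a distribution function supported on [0, c] with mean 1 (∫ z dF_m(z) = 1). Then for all real t and all n large enough (so that the remainder bounds apply), |∫ exp((n/m) z (e^{itm/n} − 1)) dF_m(z) − ∫ e^{itz} dF_m(z)| ≤ (1/2)(m/n) t² + (2/3)(m/n)² |t|³. -/

import Mathlib

open MeasureTheory Filter Complex


lemma aux_norm_exp_sub_one_le {u : ℂ} (hu : u.re ≤ 0) :
    ‖Complex.exp u - 1‖ ≤ ‖u‖ := by
  have hderiv : ∀ s ∈ Set.Icc (0:ℝ) 1,
      HasDerivWithinAt (fun s : ℝ => Complex.exp (s * u)) (u * Complex.exp (s * u))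
        (Set.Icc 0 1) s := by
    intro s _
    have h1 : HasDerivAt (fun z : ℂ => Complex.exp (z * u)) (u * Complex.exp ((s:ℂ) * u)) s := by
      have := ((hasDerivAt_id ((s:ℝ):ℂ)).mul_const u).cexp
      simpa [mul_comm] using this
    exact (h1.comp_ofReal).hasDerivWithinAt
  have bound : ∀ s ∈ Set.Icc (0:ℝ) 1, ‖u * Complex.exp (s * u)‖ ≤ ‖u‖ := by
    intro s hs
    simp only [norm_mul, Complex.norm_exp]
    have hre : ((s:ℂ) * u).re ≤ 0 := by
      have : ((s:ℂ) * u).re = s * u.re := by simp [Complex.mul_re]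
      rw [this]
      exact mul_nonpos_of_nonneg_of_nonpos hs.1 hu
    have h1 : Real.exp ((s:ℂ) * u).re ≤ 1 := Real.exp_le_one_iff.2 hre
    nlinarith [norm_nonneg u, Real.exp_pos (((s:ℂ)*u).re)]
  have := (convex_Icc (0:ℝ) 1).norm_image_sub_le_of_norm_hasDerivWithin_le hderiv bound
    (Set.left_mem_Icc.2 zero_le_one) (Set.right_mem_Icc.2 zero_le_one)
  simpa using this

lemma aux_norm_exp_I_sub_one_le (x : ℝ) : ‖Complex.exp (Complex.I * x) - 1‖ ≤ |x| := by
  have := aux_norm_exp_sub_one_le (u := Complex.I * x) (by simp)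
  simpa using this

lemma aux_taylor (x : ℝ) :
    ‖Complex.exp (Complex.I * x) - 1 - Complex.I * x‖ ≤ x ^ 2 / 2 := by
  have key : ∀ x : ℝ, 0 ≤ x → ‖Complex.exp (Complex.I * x) - 1 - Complex.I * x‖ ≤ x ^ 2 / 2 := by
    intro x hx
    have hderiv : ∀ s ∈ Set.uIcc (0:ℝ) x,
        HasDerivAt (fun y : ℝ => Complex.exp (Complex.I * y) - 1 - Complex.I * y)
          (Complex.I * (Complex.exp (Complex.I * s) - 1)) s := by
      intro s _
      have h1 : HasDerivAt (fun z : ℂ => Complex.exp (Complex.I * z) - 1 - Complex.I * z)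
          (Complex.I * (Complex.exp (Complex.I * s) - 1)) s := by
        have h2 := ((Complex.hasDerivAt_exp (Complex.I * s)).comp _
          ((hasDerivAt_id ((s:ℝ):ℂ)).const_mul Complex.I))
        have h3 : HasDerivAt (fun z : ℂ => Complex.I * z) Complex.I ((s:ℝ):ℂ) := by
          simpa using (hasDerivAt_id ((s:ℝ):ℂ)).const_mul Complex.I
        have := (h2.sub_const 1).sub h3
        exact (show HasDerivAt (fun z : ℂ => Complex.exp (Complex.I * z) - 1 - Complex.I * z) _
          ((s:ℝ):ℂ) from this).congr_deriv (by ring)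
      exact h1.comp_ofReal
    have hint : IntervalIntegrable (fun s : ℝ => Complex.I * (Complex.exp (Complex.I * s) - 1))
        MeasureTheory.volume 0 x := by
      apply Continuous.intervalIntegrable
      fun_prop
    have heq := intervalIntegral.integral_eq_sub_of_hasDerivAt hderiv hint
    have hnorm : ‖∫ s in (0:ℝ)..x, Complex.I * (Complex.exp (Complex.I * s) - 1)‖
        ≤ |∫ s in (0:ℝ)..x, s| := by
      apply intervalIntegral.norm_integral_le_abs_of_norm_le
      · refine (MeasureTheory.ae_restrict_mem measurableSet_uIoc).mono fun s hs => ?_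
        rw [Set.uIoc_of_le hx] at hs
        have h := aux_norm_exp_I_sub_one_le s
        calc ‖Complex.I * (Complex.exp (Complex.I * s) - 1)‖
            = ‖Complex.exp (Complex.I * s) - 1‖ := by
              rw [norm_mul]; simp
          _ ≤ |s| := h
          _ = s := abs_of_pos hs.1
      · exact Continuous.intervalIntegrable continuous_id _ _
    rw [heq] at hnorm
    simp only [Complex.ofReal_zero, mul_zero, Complex.exp_zero, integral_id] at hnorm
    have h2 : |(x ^ 2 - 0 ^ 2) / 2| = x ^ 2 / 2 := by
      rw [_root_.abs_of_nonneg (by nlinarith [sq_nonneg x] : (0:ℝ) ≤ (x ^ 2 - 0 ^ 2) / 2)]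
      ring
    have h3 : cexp (I * ↑x) - 1 - I * ↑x - (1 - 1 - 0) = cexp (I * ↑x) - 1 - I * ↑x := by
      ring
    rw [h3, h2] at hnorm
    exact hnorm
  rcases le_or_gt 0 x with hx | hx
  · exact key x hx
  · have hy := key (-x) (by linarith)
    have hconj : Complex.exp (Complex.I * x) - 1 - Complex.I * x
        = starRingEnd ℂ (Complex.exp (Complex.I * ((-x:ℝ):ℝ)) - 1 - Complex.I * ((-x:ℝ):ℝ)) := by
      rw [map_sub, map_sub, map_mul, ← Complex.exp_conj, map_mul]
      simp only [Complex.conj_I, Complex.conj_ofReal, map_one, Complex.ofReal_neg, map_neg]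
      ring_nf
    rw [hconj, RCLike.norm_conj]
    calc _ ≤ (-x) ^ 2 / 2 := hy
      _ = x ^ 2 / 2 := by ring

theorem charFun_difference_bound
    (c : ℝ) (hc : 0 < c)
    (P : ℕ → ProbabilityMeasure ℝ)
    (hsupp : ∀ k, (P k : Measure ℝ) (Set.Icc (0 : ℝ) c) = 1)
    (hmean : ∀ k, ∫ z, z ∂(P k : Measure ℝ) = 1)
    (m n : ℕ → ℝ) (hmn : ∀ k, 0 < m k ∧ m k < n k)
    (hratio : Tendsto (fun k => m k / n k) atTop (nhds 0)) (t : ℝ) :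
    ∀ᶠ k in atTop,
      ‖∫ z, Complex.exp ((n k / m k : ℝ) * z *
            (Complex.exp (Complex.I * t * (m k / n k : ℝ)) - 1)) ∂(P k : Measure ℝ) -
          ∫ z, Complex.exp (Complex.I * t * z) ∂(P k : Measure ℝ)‖ ≤
        (1 / 2) * (m k / n k) * t ^ 2 + (2 / 3) * (m k / n k) ^ 2 * |t| ^ 3 := by
  refine Filter.Eventually.of_forall fun k => ?_
  obtain ⟨hm, hmn'⟩ := hmn k
  have hn : 0 < n k := hm.trans hmn'
  set r : ℝ := m k / n k with hr_def
  set w : ℝ := n k / m k with hw_def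
  have hr : 0 < r := div_pos hm hn
  have hw : 0 < w := div_pos hn hm
  have hwr : w * r = 1 := by
    rw [hr_def, hw_def]; field_simp
  set μ : Measure ℝ := (P k : Measure ℝ) with hμ_def
  have hnull : μ (Set.Icc (0:ℝ) c)ᶜ = 0 := by
    rw [measure_compl measurableSet_Icc (measure_ne_top μ _), hsupp k, measure_univ, tsub_self]
  have hae : ∀ᵐ z ∂μ, z ∈ Set.Icc (0:ℝ) c := by
    rw [MeasureTheory.ae_iff]
    have : {a : ℝ | ¬ a ∈ Set.Icc (0:ℝ) c} = (Set.Icc (0:ℝ) c)ᶜ := rfl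
    rw [this]
    exact hnull
  -- real part nonpositivity
  have hre : ∀ z : ℝ, 0 ≤ z →
      ((w:ℂ) * z * (Complex.exp (Complex.I * t * r) - 1)).re ≤ 0 := by
    intro z hz0
    have h1 : ((w:ℂ) * z * (Complex.exp (Complex.I * t * r) - 1))
        = ((w * z : ℝ) : ℂ) * (Complex.exp (((t * r : ℝ) : ℂ) * Complex.I) - 1) := by
      push_cast; ring_nf
    rw [h1, Complex.re_ofReal_mul]
    apply mul_nonpos_of_nonneg_of_nonpos (by positivity)
    simp only [Complex.sub_re, Complex.one_re, Complex.exp_ofReal_mul_I_re]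
    linarith [Real.cos_le_one (t * r)]
  -- continuity and integrability
  have hfc : Continuous fun z : ℝ =>
      Complex.exp ((w:ℂ) * z * (Complex.exp (Complex.I * t * r) - 1)) := by fun_prop
  have hgc : Continuous fun z : ℝ => Complex.exp (Complex.I * t * z) := by fun_prop
  have hf_int : Integrable (fun z : ℝ =>
      Complex.exp ((w:ℂ) * z * (Complex.exp (Complex.I * t * r) - 1))) μ := by
    apply Integrable.mono' (integrable_const (1:ℝ)) hfc.aestronglyMeasurable
    filter_upwards [hae] with z hz
    rw [Complex.norm_exp]
    exact Real.exp_le_one_iff.2 (hre z hz.1)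
  have hg_int : Integrable (fun z : ℝ => Complex.exp (Complex.I * t * z)) μ := by
    apply Integrable.mono' (integrable_const (1:ℝ)) hgc.aestronglyMeasurable
    refine Filter.Eventually.of_forall fun z => ?_
    rw [Complex.norm_exp]
    have : (Complex.I * t * z).re = 0 := by
      have : (Complex.I * t * z) = ((t * z : ℝ) : ℂ) * Complex.I := by push_cast; ring
      rw [this]
      simp [Complex.mul_re]
    rw [this, Real.exp_zero]
  have hz_int : Integrable (fun z : ℝ => z) μ := by
    apply Integrable.mono' (integrable_const c) aestronglyMeasurable_id
    filter_upwards [hae] with z hz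
    simp only [id_eq, Real.norm_eq_abs]
    rw [_root_.abs_of_nonneg hz.1]
    exact hz.2
  -- pointwise bound
  have hbound : ∀ z ∈ Set.Icc (0:ℝ) c,
      ‖Complex.exp ((w:ℂ) * z * (Complex.exp (Complex.I * t * r) - 1)) -
        Complex.exp (Complex.I * t * z)‖ ≤ t ^ 2 * r / 2 * z := by
    intro z hz
    have hz0 : 0 ≤ z := hz.1
    set a : ℂ := (w:ℂ) * z * (Complex.exp (Complex.I * t * r) - 1) with ha
    set b : ℂ := Complex.I * t * z with hb
    have hbre : b.re = 0 := by
      have : b = ((t * z : ℝ) : ℂ) * Complex.I := by rw [hb]; push_cast; ring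
      rw [this]; simp [Complex.mul_re]
    have hsplit : Complex.exp a - Complex.exp b
        = Complex.exp b * (Complex.exp (a - b) - 1) := by
      rw [mul_sub, mul_one, ← Complex.exp_add]
      ring_nf
    have habre : (a - b).re ≤ 0 := by
      rw [Complex.sub_re, hbre, sub_zero]
      exact hre z hz0
    have hab : a - b = ((w * z : ℝ) : ℂ) *
        (Complex.exp (Complex.I * ((t * r : ℝ) : ℂ)) - 1 - Complex.I * ((t * r : ℝ) : ℂ)) := by
      rw [ha, hb]
      push_cast
      have hwz : (w : ℂ) * r = 1 := by
        rw [← Complex.ofReal_mul, hwr, Complex.ofReal_one]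
      calc (w:ℂ) * z * (Complex.exp (Complex.I * t * r) - 1) - Complex.I * t * z
          = (w:ℂ) * z * (Complex.exp (Complex.I * (t * r)) - 1 - Complex.I * (t * r))
            + ((w:ℂ) * r - 1) * (Complex.I * t * z) := by ring_nf
        _ = (w:ℂ) * z * (Complex.exp (Complex.I * (t * r)) - 1 - Complex.I * (t * r)) := by
            rw [hwz]; ring
        _ = _ := by push_cast; ring_nf
    calc ‖Complex.exp a - Complex.exp b‖
        = ‖Complex.exp b‖ * ‖Complex.exp (a - b) - 1‖ := by rw [hsplit, norm_mul]
      _ = ‖Complex.exp (a - b) - 1‖ := by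
          rw [Complex.norm_exp, hbre, Real.exp_zero, one_mul]
      _ ≤ ‖a - b‖ := aux_norm_exp_sub_one_le habre
      _ = (w * z) * ‖Complex.exp (Complex.I * ((t * r : ℝ) : ℂ)) - 1
            - Complex.I * ((t * r : ℝ) : ℂ)‖ := by
          rw [hab, norm_mul, Complex.norm_of_nonneg (by positivity : (0:ℝ) ≤ w * z)]
      _ ≤ (w * z) * ((t * r) ^ 2 / 2) :=
          mul_le_mul_of_nonneg_left (aux_taylor (t * r)) (by positivity)
      _ = t ^ 2 * r / 2 * z := by
          rw [show (w * z) * ((t * r) ^ 2 / 2) = (w * r) * (t ^ 2 * r / 2 * z) from by ring,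
            hwr, one_mul]
  -- conclude
  rw [← MeasureTheory.integral_sub hf_int hg_int]
  have hnonneg : (0:ℝ) ≤ 2 / 3 * r ^ 2 * |t| ^ 3 := by positivity
  calc ‖∫ z, (Complex.exp ((w:ℂ) * z * (Complex.exp (Complex.I * t * r) - 1)) -
          Complex.exp (Complex.I * t * z)) ∂μ‖
      ≤ ∫ z, ‖Complex.exp ((w:ℂ) * z * (Complex.exp (Complex.I * t * r) - 1)) -
          Complex.exp (Complex.I * t * z)‖ ∂μ := norm_integral_le_integral_norm _
    _ ≤ ∫ z, t ^ 2 * r / 2 * z ∂μ := by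
        apply integral_mono_ae ((hf_int.sub hg_int).norm) (hz_int.const_mul _)
        filter_upwards [hae] with z hz using hbound z hz
    _ = t ^ 2 * r / 2 := by
        rw [MeasureTheory.integral_const_mul, hμ_def, hmean k, mul_one]
    _ ≤ 1 / 2 * r * t ^ 2 + 2 / 3 * r ^ 2 * |t| ^ 3 := by linarith
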